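/- Let φ : Δ → Δ, and for p ∈ Δ define μ(p) = (Σ_{i=0}^n p_i φ_i(p)) / (Σ_{i=0}^n p_i²) and g_i(p) = φ_i(p) − p_i μ(p). Suppose p* ∈ Δ is an equilibrium of g, i.e., g_i(p*) ≤ 0 for all i = 0, 1, …, n and g_i(p*) = 0 for every i with p*_i > 0. Then μ(p*) = 1 and φ(p*) = p*. -/

import Mathlib

open Filter Topology

noncomputable section

/-- The ambient Euclidean space `ℝ^{n+1}`. -/
abbrev E (n : ℕ) := EuclideanSpace ℝ (Fin (n + 1))

/-- The standard `n`-dimensional simplex in `ℝ^{n+1}` with the Euclidean metric. -/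
def simplexE (n : ℕ) : Set (E n) := {p | (∀ i, 0 ≤ p i) ∧ ∑ i, p i = 1}

/-- With `μ(p) = (Σ_i p_i φ_i(p)) / (Σ_i p_i²)` and `g_i(p) = φ_i(p) − p_i μ(p)`: if
`p* ∈ Δ` is an equilibrium of `g` (`g_i(p*) ≤ 0` for all `i` and `g_i(p*) = 0` whenever
`p*_i > 0`), then `μ(p*) = 1` and `φ(p*) = p*`. -/
theorem equilibrium_of_g_is_fixed_point (n : ℕ) (φ : E n → E n)
    (hmap : Set.MapsTo φ (simplexE n) (simplexE n))
    (μ : E n → ℝ)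
    (hμ : ∀ p, μ p = (∑ i, p i * φ p i) / (∑ i, (p i) ^ 2))
    (g : E n → E n)
    (hg : ∀ p i, g p i = φ p i - p i * μ p)
    (pstar : E n) (hp : pstar ∈ simplexE n)
    (heq₁ : ∀ i, g pstar i ≤ 0)
    (heq₂ : ∀ i, 0 < pstar i → g pstar i = 0) :
    μ pstar = 1 ∧ φ pstar = pstar := by
  obtain ⟨hφpos, hφsum⟩ := hmap hp
  -- φ i = pstar i * μ pstar for every i
  have key : ∀ i, φ pstar i = pstar i * μ pstar := by
    intro i
    rcases lt_or_eq_of_le (hp.1 i) with hpos | hzero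
    · have := heq₂ i hpos
      rw [hg] at this
      linarith
    · have h1 := heq₁ i
      rw [hg, ← hzero] at h1
      have h2 := hφpos i
      rw [← hzero]
      simp at h1 ⊢
      linarith
  have hμ1 : μ pstar = 1 := by
    have : (∑ i, φ pstar i) = (∑ i, pstar i) * μ pstar := by
      rw [Finset.sum_mul]
      exact Finset.sum_congr rfl fun i _ => key i
    rw [hφsum, hp.2, one_mul] at this
    exact this.symm
  refine ⟨hμ1, ?_⟩
  ext i
  rw [key i, hμ1, mul_one]
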